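/- Let n ≥ 2 and let f ∈ ℂ[x₀,…,xₙ] be homogeneous of degree d such that V = V(f) ⊆ ℙⁿ has only isolated singularities, and let p = (1:0:⋯:0) be a singular point of V. Set g(y₁,…,yₙ) = f(1,y₁,…,yₙ). Then g does NOT belong to the ideal (g₁,…,gₙ) in the localization of ℂ[y₁,…,yₙ] at the maximal ideal (y₁,…,yₙ) if and only if for every Jacobian syzygy (A₀,…,Aₙ) ∈ R^{n+1} (i.e. every tuple with A₀∂₀f + ⋯ + Aₙ∂ₙf = 0) and every index k ∈ {0,…,n}, one has Aₖ(1,0,…,0) = 0. -/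

import Mathlib

open MvPolynomial

noncomputable section

/-- Dehomogenization with respect to `x₀`: substitute `x₀ = 1`, `xᵢ = yᵢ`. -/
def deh (n : ℕ) : MvPolynomial (Fin (n + 1)) ℂ →ₐ[ℂ] MvPolynomial (Fin n) ℂ :=
  aeval (fun i => Fin.cases 1 (fun j => X j) i)

/-- The point `(1:0:⋯:0)`. -/
def pt (n : ℕ) : Fin (n + 1) → ℂ := fun i => if i = 0 then 1 else 0

/-- Saito's local condition at the origin: `g` lies in the ideal generated by its partial
derivatives in the localization of `ℂ[y₁,…,yₙ]` at the maximal ideal `(y₁,…,yₙ)`;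
equivalently, `u·g ∈ (g₁,…,gₙ)` for some polynomial `u` with `u(0) ≠ 0`. -/
def SaitoQH {n : ℕ} (g : MvPolynomial (Fin n) ℂ) : Prop :=
  ∃ u : MvPolynomial (Fin n) ℂ, eval (0 : Fin n → ℂ) u ≠ 0 ∧
    u * g ∈ Ideal.span (Set.range fun j : Fin n => pderiv j g)

/-! ### Auxiliary lemmas -/

section Aux

variable {m : ℕ}

lemma deh_X0 (n : ℕ) : deh n (X 0) = 1 := by simp [deh]

lemma deh_Xsucc (n : ℕ) (j : Fin n) : deh n (X j.succ) = X j := by simp [deh]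

lemma eval_deh (n : ℕ) (F : MvPolynomial (Fin (n+1)) ℂ) (y : Fin n → ℂ) :
    eval y (deh n F) = eval (Fin.cons 1 y) F := by
  induction F using MvPolynomial.induction_on with
  | C a => simp [deh]
  | add p q hp hq => simp [hp, hq]
  | mul_X p i hp =>
    simp only [map_mul, hp, eval_mul]
    congr 1
    induction i using Fin.cases with
    | zero => simp [deh]
    | succ j => simp [deh]

lemma cons_one_zero (n : ℕ) : (Fin.cons 1 (0 : Fin n → ℂ) : Fin (n+1) → ℂ) = pt n := by
  funext i
  induction i using Fin.cases with
  | zero => simp [pt]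
  | succ j => simp [pt, Fin.succ_ne_zero]

lemma eval_deh_zero (n : ℕ) (F : MvPolynomial (Fin (n+1)) ℂ) :
    eval 0 (deh n F) = eval (pt n) F := by
  rw [eval_deh, cons_one_zero]

lemma pderiv_deh (n : ℕ) (F : MvPolynomial (Fin (n+1)) ℂ) (j : Fin n) :
    pderiv j (deh n F) = deh n (pderiv j.succ F) := by
  induction F using MvPolynomial.induction_on with
  | C a => simp [deh]
  | add p q hp hq => simp [hp, hq]
  | mul_X p i hp =>
    induction i using Fin.cases with
    | zero =>
      rw [map_mul, deh_X0, mul_one, hp, pderiv_mul,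
          pderiv_X_of_ne (Fin.succ_ne_zero j).symm, mul_zero, add_zero, map_mul, deh_X0, mul_one]
    | succ i' =>
      rcases eq_or_ne i' j with rfl | h
      · rw [map_mul, deh_Xsucc, pderiv_mul, hp, pderiv_X_self, mul_one, pderiv_mul,
            pderiv_X_self, mul_one, map_add, map_mul, deh_Xsucc]
      · rw [map_mul, deh_Xsucc, pderiv_mul, hp, pderiv_X_of_ne h, mul_zero, add_zero,
            pderiv_mul, pderiv_X_of_ne (fun hh => h (Fin.succ_injective _ hh)), mul_zero,
            add_zero, map_mul, deh_Xsucc]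

lemma degree_sum_fin (s : Fin m →₀ ℕ) : s.degree = ∑ i, s i := by
  rw [Finsupp.degree]
  exact Finset.sum_subset (Finset.subset_univ s.support)
    fun x _ hx => Finsupp.notMem_support_iff.mp hx

lemma degree_add' (s t : Fin m →₀ ℕ) : (s + t).degree = s.degree + t.degree := by
  simp only [Finsupp.degree_eq_weight_one, map_add]

lemma degree_single' (i : Fin m) (k : ℕ) : (Finsupp.single i k).degree = k := by
  rcases Nat.eq_zero_or_pos k with rfl | hk
  · simp [Finsupp.degree]
  · rw [Finsupp.degree_apply, Finsupp.support_single_ne_zero _ hk.ne']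
    simp

lemma degree_mapDomain (α : Fin m →₀ ℕ) :
    (α.mapDomain (Fin.succ : Fin m → Fin (m+1))).degree = α.degree := by
  show (α.mapDomain Fin.succ).sum (fun _ e => e) = α.sum fun _ e => e
  exact Finsupp.sum_mapDomain_index (fun _ => rfl) (fun _ _ _ => rfl)

lemma pderiv_comm' (i j : Fin m) (p : MvPolynomial (Fin m) ℂ) :
    pderiv i (pderiv j p) = pderiv j (pderiv i p) := by
  rcases eq_or_ne i j with rfl | h
  · rfl
  induction p using MvPolynomial.induction_on' with
  | add p q hp hq => simp [hp, hq]
  | monomial s a =>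
    simp only [pderiv_monomial]
    have hji : (Finsupp.single j 1) i = 0 := Finsupp.single_eq_of_ne h
    have hij : (Finsupp.single i 1) j = 0 := Finsupp.single_eq_of_ne (Ne.symm h)
    rw [Finsupp.tsub_apply, Finsupp.tsub_apply, hji, hij]
    congr 1
    · rw [tsub_tsub, tsub_tsub, add_comm]
    · push_cast [Nat.sub_zero]; ring

/-- Euler's identity. -/
lemma euler_id {d : ℕ} {f : MvPolynomial (Fin m) ℂ} (hf : f.IsHomogeneous d) :
    ∑ i, X i * pderiv i f = C (d : ℂ) * f := by
  conv_lhs => rw [← support_sum_monomial_coeff f]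
  conv_rhs => rw [← support_sum_monomial_coeff f]
  rw [Finset.mul_sum]
  simp only [map_sum, Finset.mul_sum]
  rw [Finset.sum_comm]
  refine Finset.sum_congr rfl fun s hs => ?_
  have hdeg : s.degree = d := by
    have := hf (Finsupp.mem_support_iff.mp hs)
    rwa [Pi.one_def, ← Finsupp.degree_eq_weight_one] at this
  have key : ∀ i : Fin m, X i * pderiv i (monomial s (coeff s f)) =
      monomial s (coeff s f * (s i : ℂ)) := by
    intro i
    rw [pderiv_monomial]
    rcases Nat.eq_zero_or_pos (s i) with h0 | hpos
    · rw [h0]; push_cast; rw [mul_zero, monomial_zero, monomial_zero, mul_zero]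
    · rw [X, monomial_mul, one_mul, add_tsub_cancel_of_le]
      exact Finsupp.single_le_iff.mpr hpos
  rw [Finset.sum_congr rfl fun i _ => key i]
  rw [← map_sum, ← Finset.mul_sum, ← Nat.cast_sum, ← degree_sum_fin, hdeg,
    C_mul_monomial, mul_comm]

lemma isHomogeneous_pderiv {d : ℕ} {f : MvPolynomial (Fin m) ℂ} (hf : f.IsHomogeneous d)
    (i : Fin m) : (pderiv i f).IsHomogeneous (d - 1) := by
  conv_lhs => rw [← support_sum_monomial_coeff f]
  rw [map_sum]
  refine IsHomogeneous.sum _ _ _ fun s hs => ?_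
  rw [pderiv_monomial]
  rcases Nat.eq_zero_or_pos (s i) with h0 | hpos
  · rw [h0]; push_cast; rw [mul_zero, monomial_zero]; exact isHomogeneous_zero _ _ _
  · apply isHomogeneous_monomial
    have hdeg : s.degree = d := by
      have := hf (Finsupp.mem_support_iff.mp hs)
      rwa [Pi.one_def, ← Finsupp.degree_eq_weight_one] at this
    have : Finsupp.single i 1 + (s - Finsupp.single i 1) = s :=
      add_tsub_cancel_of_le (Finsupp.single_le_iff.mpr hpos)
    have h2 := degree_add' (Finsupp.single i 1) (s - Finsupp.single i 1)
    rw [this, hdeg, degree_single'] at h2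
    omega

lemma eval_smul_homog {d : ℕ} {f : MvPolynomial (Fin m) ℂ} (hf : f.IsHomogeneous d)
    (c : ℂ) (v : Fin m → ℂ) : eval (c • v) f = c ^ d * eval v f := by
  rw [eval_eq', eval_eq', Finset.mul_sum]
  refine Finset.sum_congr rfl fun s hs => ?_
  have hdeg : s.degree = d := by
    have := hf (Finsupp.mem_support_iff.mp hs)
    rwa [Pi.one_def, ← Finsupp.degree_eq_weight_one] at this
  have : ∏ i, (c • v) i ^ s i = c ^ d * ∏ i, v i ^ s i := by
    simp only [Pi.smul_apply, smul_eq_mul, mul_pow]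
    rw [Finset.prod_mul_distrib, Finset.prod_pow_eq_pow_sum]
    rw [← degree_sum_fin, hdeg]
  rw [this]; ring

/-- Homogenization of `p` to degree `N` with respect to a new first variable. -/
def homog (N : ℕ) (p : MvPolynomial (Fin m) ℂ) : MvPolynomial (Fin (m+1)) ℂ :=
  ∑ α ∈ p.support, X 0 ^ (N - α.degree) * rename Fin.succ (monomial α (coeff α p))

lemma deh_rename (q : MvPolynomial (Fin m) ℂ) : deh m (rename Fin.succ q) = q := by
  rw [show deh m = aeval (fun i => Fin.cases 1 (fun j => X j) i) from rfl, aeval_rename]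
  have : ((fun i => Fin.cases 1 (fun j => X j) i) ∘ (Fin.succ : Fin m → Fin (m+1)))
      = (X : Fin m → MvPolynomial (Fin m) ℂ) := by
    funext j; simp
  rw [this, aeval_X_left]; rfl

lemma deh_homog (N : ℕ) (p : MvPolynomial (Fin m) ℂ) : deh m (homog N p) = p := by
  rw [homog, map_sum]
  conv_rhs => rw [← support_sum_monomial_coeff p]
  refine Finset.sum_congr rfl fun α hα => ?_
  rw [map_mul, map_pow, deh_rename]
  have : deh m (X 0) = 1 := by simp [deh]
  rw [this, one_pow, one_mul]

lemma homog_isHomogeneous (N : ℕ) (p : MvPolynomial (Fin m) ℂ)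
    (hN : p.totalDegree ≤ N) : (homog N p).IsHomogeneous N := by
  refine IsHomogeneous.sum _ _ _ fun α hα => ?_
  rw [X_pow_eq_monomial, rename_monomial, monomial_mul, one_mul]
  apply isHomogeneous_monomial
  rw [degree_add', degree_single', degree_mapDomain]
  have : α.degree ≤ N := le_trans (le_totalDegree ?_) hN
  · omega
  · exact hα

lemma eval_pt_homog (N : ℕ) (p : MvPolynomial (Fin m) ℂ) :
    eval (pt m) (homog N p) = eval 0 p := by
  rw [homog, map_sum]
  have h1 : eval (pt m) (X (0 : Fin (m+1))) = 1 := by simp [pt]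
  have h2 : (pt m) ∘ (Fin.succ : Fin m → Fin (m+1)) = 0 := by
    funext j; simp [pt, Fin.succ_ne_zero]
  have : ∀ α ∈ p.support, eval (pt m) (X (0:Fin (m+1)) ^ (N - α.degree) *
      rename Fin.succ (monomial α (coeff α p))) = eval 0 (monomial α (coeff α p)) := by
    intro α hα
    rw [eval_mul, map_pow, h1, one_pow, one_mul, eval_rename, h2]
  rw [Finset.sum_congr rfl this, ← map_sum, support_sum_monomial_coeff]

/-- A homogeneous polynomial whose dehomogenization vanishes is zero. -/
lemma eq_zero_of_deh_eq_zero {M : ℕ} {F : MvPolynomial (Fin (m+1)) ℂ}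
    (hF : F.IsHomogeneous M) (h : deh m F = 0) : F = 0 := by
  have hx : ∀ x : Fin (m+1) → ℂ, eval x (X 0 * F) = 0 := by
    intro x
    rcases eq_or_ne (x 0) 0 with h0 | h0
    · rw [eval_mul, eval_X, h0, zero_mul]
    · have hxdec : x = (x 0) • (Fin.cons 1 (fun j => x j.succ / x 0) : Fin (m+1) → ℂ) := by
        funext i
        induction i using Fin.cases with
        | zero => simp
        | succ j =>
          simp only [Pi.smul_apply, Fin.cons_succ, smul_eq_mul]
          field_simp
      rw [eval_mul]
      have h2 := eval_smul_homog hF (x 0) (Fin.cons 1 fun j => x j.succ / x 0 : Fin (m+1) → ℂ)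
      rw [← hxdec] at h2
      rw [h2, ← eval_deh, h, map_zero, mul_zero, mul_zero]
  have hXF : (X 0 : MvPolynomial (Fin (m+1)) ℂ) * F = 0 :=
    MvPolynomial.funext fun x => by rw [hx x, map_zero]
  rcases mul_eq_zero.mp hXF with h' | h'
  · exact absurd h' (X_ne_zero 0)
  · exact h'

end Aux


lemma deh_C (n : ℕ) (a : ℂ) : deh n (C a) = C a := by simp [deh]

/-- Corollary 3.2. -/
theorem stmt_2 (n d : ℕ) (hn : 2 ≤ n) (f : MvPolynomial (Fin (n + 1)) ℂ)
    (hf : f.IsHomogeneous d)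
    (hiso : {P : Projectivization ℂ (Fin (n + 1) → ℂ) |
      ∀ i, eval P.rep (pderiv i f) = 0}.Finite)
    (hsing : ∀ i, eval (pt n) (pderiv i f) = 0) :
    ¬ SaitoQH (deh n f) ↔
      ∀ A : Fin (n + 1) → MvPolynomial (Fin (n + 1)) ℂ,
        (∑ i, A i * pderiv i f = 0) → ∀ k, eval (pt n) (A k) = 0 := by
  classical
  -- the degree is positive
  have hd0 : d ≠ 0 := by
    rintro rfl
    have hpz : ∀ i, pderiv i f = 0 := by
      intro i
      have ht : f.totalDegree = 0 := Nat.le_zero.mp hf.totalDegree_le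
      have h0 := (totalDegree_eq_zero_iff _ f).mp ht
      rw [← support_sum_monomial_coeff f, map_sum]
      refine Finset.sum_eq_zero fun s hs => ?_
      rw [pderiv_monomial, h0 s hs i]
      push_cast
      rw [mul_zero, monomial_zero]
    have huniv : {P : Projectivization ℂ (Fin (n + 1) → ℂ) |
        ∀ i, eval P.rep (pderiv i f) = 0} = Set.univ := by
      ext P; simp [hpz]
    rw [huniv, Set.finite_univ_iff] at hiso
    have hn0 : 0 < n := by omega
    set j0 : Fin n := ⟨0, hn0⟩ with hj0
    set v : ℂ → (Fin (n+1) → ℂ) :=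
      fun t => Fin.cons 1 (fun j => if j = j0 then t else 0) with hv
    have hvne : ∀ t, v t ≠ 0 := by
      intro t ht
      have := congrFun ht 0
      simp [hv] at this
    have hinj : Function.Injective (fun t => Projectivization.mk ℂ (v t) (hvne t)) := by
      intro t t' h
      rw [Projectivization.mk_eq_mk_iff] at h
      obtain ⟨α, hα⟩ := h
      have h0 := congrFun hα 0
      have h1 := congrFun hα j0.succ
      simp only [hv, Units.smul_def, Pi.smul_apply, Fin.cons_zero, Fin.cons_succ,
        smul_eq_mul, mul_one, if_pos rfl] at h0 h1
      rw [h0, one_mul] at h1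
      exact h1.symm
    haveI : Finite ℂ := @Finite.of_injective _ _ hiso _ hinj
    exact not_finite ℂ
  have hdC : (d : ℂ) ≠ 0 := Nat.cast_ne_zero.mpr hd0
  -- the dehomogenized Euler relation
  have heuler : deh n (pderiv 0 f) =
      C (d:ℂ) * deh n f - ∑ j, X j * pderiv j (deh n f) := by
    have h1 := congrArg (deh n) (euler_id hf)
    simp only [map_sum, map_mul, deh_C] at h1
    rw [Fin.sum_univ_succ, deh_X0, one_mul] at h1
    have h2 : ∀ j : Fin n, deh n (X j.succ) * deh n (pderiv j.succ f)
        = X j * pderiv j (deh n f) := by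
      intro j; rw [deh_Xsucc, pderiv_deh]
    rw [Finset.sum_congr rfl fun j _ => h2 j] at h1
    linear_combination h1
  -- f vanishes at pt
  have hfpt : eval (pt n) f = 0 := by
    have h1 := congrArg (eval (pt n)) (euler_id hf)
    simp only [map_sum, eval_mul, eval_C] at h1
    rw [Finset.sum_eq_zero (fun i _ => by rw [hsing i, mul_zero])] at h1
    exact (mul_eq_zero.mp h1.symm).resolve_left hdC
  constructor
  · -- hard direction: no Saito condition → all syzygies vanish at pt
    intro hns A hA k
    by_contra hk
    set a : Fin (n+1) → MvPolynomial (Fin n) ℂ := fun i => deh n (A i) with ha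
    set c : Fin n → MvPolynomial (Fin n) ℂ := fun j => a j.succ - a 0 * X j with hc
    set w : MvPolynomial (Fin n) ℂ := C (d:ℂ) * a 0 with hw
    have hrel : w * deh n f + ∑ j, c j * pderiv j (deh n f) = 0 := by
      have h1 := congrArg (deh n) hA
      simp only [map_sum, map_mul, map_zero] at h1
      rw [Fin.sum_univ_succ, heuler] at h1
      have h2 : ∀ j : Fin n, deh n (A (Fin.succ j)) * deh n (pderiv (Fin.succ j) f)
          = a j.succ * pderiv j (deh n f) := by
        intro j; rw [pderiv_deh]
      rw [Finset.sum_congr rfl fun j _ => h2 j] at h1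
      have h3 : ∀ j : Fin n, c j * pderiv j (deh n f)
          = a j.succ * pderiv j (deh n f) - a 0 * (X j * pderiv j (deh n f)) := by
        intro j; rw [hc]; ring
      rw [Finset.sum_congr rfl fun j _ => h3 j, Finset.sum_sub_distrib, ← Finset.mul_sum]
      rw [hw]
      linear_combination h1
    rcases Fin.eq_zero_or_eq_succ k with rfl | ⟨j₀, rfl⟩
    · -- if A₀(p) ≠ 0 then the Saito condition holds, contradiction
      apply hns
      refine ⟨w, ?_, ?_⟩
      · rw [hw, map_mul, eval_C, ha]
        simp only []
        rw [eval_deh_zero]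
        exact mul_ne_zero hdC hk
      · rw [Ideal.span, Submodule.mem_span_range_iff_exists_fun]
        refine ⟨fun j => -c j, ?_⟩
        simp only [smul_eq_mul]
        have : ∑ j, -c j * pderiv j (deh n f) = -∑ j, c j * pderiv j (deh n f) := by
          rw [← Finset.sum_neg_distrib]
          exact Finset.sum_congr rfl fun j _ => by ring
        rw [this]
        linear_combination -hrel
    · -- otherwise we contradict the isolatedness of the singular point
      have hc0 : eval 0 (c j₀) ≠ 0 := by
        rw [hc]
        simp only [ha]
        rw [map_sub, map_mul, eval_deh_zero, eval_deh_zero, eval_X]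
        simpa using hk
      set T : Ideal (MvPolynomial (Fin n) ℂ) :=
        Ideal.span ({deh n f} ∪ Set.range (fun j => pderiv j (deh n f))) with hT
      have hgT : deh n f ∈ T := Ideal.subset_span (Or.inl rfl)
      have hgjT : ∀ j, pderiv j (deh n f) ∈ T := fun j => Ideal.subset_span (Or.inr ⟨j, rfl⟩)
      have hT0 : ∀ p ∈ T, eval 0 p = 0 := by
        intro p hp
        have hle : T ≤ RingHom.ker (eval (0 : Fin n → ℂ)) := by
          rw [hT, Ideal.span_le]
          rintro p (rfl | ⟨j, rfl⟩) <;> rw [SetLike.mem_coe, RingHom.mem_ker]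
          · rw [eval_deh_zero]; exact hfpt
          · show eval (0 : Fin n → ℂ) (pderiv j (deh n f)) = 0
            rw [pderiv_deh, eval_deh_zero]; exact hsing _
        exact hle hp
      set D : MvPolynomial (Fin n) ℂ → MvPolynomial (Fin n) ℂ :=
        fun p => ∑ j, c j * pderiv j p with hD
      have hDT : ∀ p ∈ T, D p ∈ T := by
        intro p hp
        rw [hT, Ideal.span] at hp
        refine Submodule.span_induction ?_ ?_ ?_ ?_ hp
        · rintro x (rfl | ⟨i, rfl⟩)
          · have hDg : D (deh n f) = -(w * deh n f) := by
              simp only [hD]; linear_combination hrel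
            rw [hDg]; exact T.neg_mem (T.mul_mem_left _ hgT)
          · have hpd := congrArg (pderiv i) hrel
            simp only [map_add, map_sum, map_zero, pderiv_mul] at hpd
            rw [Finset.sum_add_distrib] at hpd
            have hDgi : D (pderiv i (deh n f)) =
                -(pderiv i w * deh n f + w * pderiv i (deh n f)
                  + ∑ j, pderiv i (c j) * pderiv j (deh n f)) := by
              simp only [hD]
              have hcm : ∀ j : Fin n, c j * pderiv j (pderiv i (deh n f))
                  = c j * pderiv i (pderiv j (deh n f)) := fun j => by rw [pderiv_comm']
              rw [Finset.sum_congr rfl fun j _ => hcm j]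
              linear_combination hpd
            rw [hDgi]
            refine T.neg_mem (T.add_mem (T.add_mem ?_ ?_) ?_)
            · exact T.mul_mem_left _ hgT
            · exact T.mul_mem_left _ (hgjT i)
            · exact Ideal.sum_mem _ fun j _ => T.mul_mem_left _ (hgjT j)
        · have : D 0 = 0 := by simp only [hD]; simp
          rw [this]; exact T.zero_mem
        · intro x y hx hy hx' hy'
          have : D (x + y) = D x + D y := by
            simp only [hD]; simp [mul_add, Finset.sum_add_distrib]
          rw [this]; exact T.add_mem hx' hy'
        · intro rr x hx hx'
          have : D (rr • x) = D rr * x + rr * D x := by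
            simp only [hD, smul_eq_mul, pderiv_mul]
            rw [Finset.sum_congr rfl (fun j _ => mul_add (c j) _ _), Finset.sum_add_distrib,
              Finset.sum_mul, Finset.mul_sum]
            congr 1
            · exact Finset.sum_congr rfl fun j _ => by ring
            · exact Finset.sum_congr rfl fun j _ => by ring
          rw [this]
          exact T.add_mem (T.mul_mem_left _ hx) (T.mul_mem_left _ hx')
      -- the zero locus of T is finite
      have hζne : ∀ q : Fin n → ℂ, (Fin.cons 1 q : Fin (n+1) → ℂ) ≠ 0 := by
        intro q hq
        have := congrFun hq 0
        simp at this
      have hZfin : (MvPolynomial.zeroLocus ℂ T).Finite := by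
        set ζ : (Fin n → ℂ) → Projectivization ℂ (Fin (n+1) → ℂ) :=
          fun q => Projectivization.mk ℂ (Fin.cons 1 q) (hζne q) with hζ
        have hsub : MvPolynomial.zeroLocus ℂ T ⊆
            ζ ⁻¹' {P : Projectivization ℂ (Fin (n + 1) → ℂ) |
              ∀ i, eval P.rep (pderiv i f) = 0} := by
          intro q hq
          have hgq : eval q (deh n f) = 0 := hq _ hgT
          have hgjq : ∀ j, eval q (pderiv j (deh n f)) = 0 := fun j => hq _ (hgjT j)
          have hcons : ∀ i, eval (Fin.cons 1 q : Fin (n+1) → ℂ) (pderiv i f) = 0 := by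
            intro i
            rw [← eval_deh]
            induction i using Fin.cases with
            | zero =>
              rw [heuler, map_sub, eval_mul, eval_C, hgq, mul_zero, map_sum]
              rw [Finset.sum_eq_zero fun j _ => by rw [eval_mul, hgjq j, mul_zero]]
              ring
            | succ j => rw [← pderiv_deh]; exact hgjq j
          intro i
          obtain ⟨α, hα⟩ := (Projectivization.mk_eq_mk_iff ℂ _ _ _ (hζne q)).mp
            (Projectivization.mk_rep (ζ q))
          rw [← hα, Units.smul_def, eval_smul_homog (isHomogeneous_pderiv hf i), hcons i,
            mul_zero]
        have hinjOn : Set.InjOn ζ (ζ ⁻¹' {P : Projectivization ℂ (Fin (n + 1) → ℂ) |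
              ∀ i, eval P.rep (pderiv i f) = 0}) := by
          intro q _ q' _ hqq
          rw [hζ] at hqq
          simp only [] at hqq
          obtain ⟨α, hα⟩ := (Projectivization.mk_eq_mk_iff ℂ _ _ (hζne q) (hζne q')).mp hqq
          have h0 := congrFun hα 0
          simp only [Units.smul_def, Pi.smul_apply, Fin.cons_zero, smul_eq_mul, mul_one] at h0
          funext j
          have hj := congrFun hα j.succ
          simp only [Units.smul_def, Pi.smul_apply, Fin.cons_succ, smul_eq_mul, h0,
            one_mul] at hj
          exact hj.symm
        exact Set.Finite.subset (Set.Finite.preimage hinjOn hiso) hsub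
      -- a polynomial vanishing on the zero locus away from the origin
      have hsel : ∀ q : Fin n → ℂ, ∃ p : MvPolynomial (Fin n) ℂ,
          eval 0 p = 1 ∧ (q ≠ 0 → eval q p = 0) := by
        intro q
        by_cases hq : q = 0
        · exact ⟨1, by simp, fun h => absurd hq h⟩
        · obtain ⟨i, hi⟩ := Function.ne_iff.mp hq
          refine ⟨1 - C (q i)⁻¹ * X i, by simp, fun _ => ?_⟩
          have : (q i)⁻¹ * q i = 1 := inv_mul_cancel₀ (by simpa using hi)
          simp [this]
      choose P hP1 hP2 using hsel
      set s : MvPolynomial (Fin n) ℂ := ∏ q ∈ hZfin.toFinset, P q with hs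
      have hs0 : eval 0 s = 1 := by
        rw [hs, map_prod]
        exact Finset.prod_eq_one fun q _ => hP1 q
      have hsZ : ∀ q ∈ MvPolynomial.zeroLocus ℂ T, eval q (X j₀ * s) = 0 := by
        intro q hq
        rw [eval_mul]
        by_cases h0 : q = 0
        · rw [h0, eval_X]
          simp
        · rw [hs, map_prod, Finset.prod_eq_zero (hZfin.mem_toFinset.mpr hq) (hP2 q h0),
            mul_zero]
      -- Nullstellensatz
      have hrad : X j₀ * s ∈ T.radical := by
        rw [← MvPolynomial.vanishingIdeal_zeroLocus_eq_radical (K := ℂ)]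
        exact fun x hx => hsZ x hx
      obtain ⟨N, hNT⟩ := hrad
      -- descending induction
      have descent : ∀ (M : ℕ) (e : MvPolynomial (Fin n) ℂ),
          eval 0 e ≠ 0 → e * X j₀ ^ M ∈ T → False := by
        intro M
        induction M with
        | zero =>
          intro e he hm
          rw [pow_zero, mul_one] at hm
          exact he (hT0 e hm)
        | succ M ih =>
          intro e he hm
          refine ih (D e * X j₀ + C ((M:ℂ)+1) * (e * c j₀)) ?_ ?_
          · rw [map_add, map_mul, map_mul, eval_X]
            simp only [Pi.zero_apply, mul_zero, zero_add, eval_C, map_mul]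
            exact mul_ne_zero (Nat.cast_add_one_ne_zero M) (mul_ne_zero he hc0)
          · have heq : (D e * X j₀ + C ((M:ℂ)+1) * (e * c j₀)) * X j₀ ^ M
                = D (e * X j₀ ^ (M+1)) := by
              simp only [hD, pderiv_mul, pderiv_pow]
              rw [Finset.sum_congr rfl (fun j _ => mul_add (c j) _ _), Finset.sum_add_distrib]
              have hS1 : ∑ j, c j * (pderiv j e * X j₀ ^ (M+1))
                  = (∑ j, c j * pderiv j e) * X j₀ ^ (M+1) := by
                rw [Finset.sum_mul]
                exact Finset.sum_congr rfl fun j _ => by ring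
              have hS2 : ∑ j, c j * (e * (((M+1 : ℕ) : MvPolynomial (Fin n) ℂ)
                    * X j₀ ^ (M+1-1) * pderiv j (X j₀)))
                  = C ((M:ℂ)+1) * (e * c j₀) * X j₀ ^ M := by
                rw [Finset.sum_eq_single j₀]
                · rw [pderiv_X_self, mul_one, Nat.add_sub_cancel]
                  have hcast : ((M+1 : ℕ) : MvPolynomial (Fin n) ℂ) = C ((M:ℂ)+1) := by
                    push_cast
                    simp [map_add, map_one]
                  rw [hcast]; ring
                · intro b _ hb
                  rw [pderiv_X_of_ne (Ne.symm hb)]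
                  ring
                · intro hj; exact absurd (Finset.mem_univ j₀) hj
              rw [hS1, hS2]
              ring
            rw [heq]
            exact hDT _ hm
      -- conclusion
      apply descent N (s ^ N)
      · rw [map_pow, hs0, one_pow]; exact one_ne_zero
      · have hcomm : s ^ N * X j₀ ^ N = (X j₀ * s) ^ N := by rw [mul_pow]; ring
        rw [hcomm]
        exact hNT


  · -- easy direction
    intro hall hS
    obtain ⟨u, hu0, humem⟩ := hS
    rw [Ideal.span, Submodule.mem_span_range_iff_exists_fun] at humem
    obtain ⟨h, hh⟩ := humem
    have hh' : ∑ j, h j * pderiv j (deh n f) = u * deh n f := by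
      simpa only [smul_eq_mul] using hh
    set r : Fin (n+1) → MvPolynomial (Fin n) ℂ :=
      fun i => Fin.cases u (fun j => u * X j - C (d:ℂ) * h j) i with hrdef
    have hrel : ∑ i, r i * deh n (pderiv i f) = 0 := by
      rw [Fin.sum_univ_succ]
      simp only [hrdef, Fin.cases_zero, Fin.cases_succ]
      rw [heuler]
      have expand : ∑ j, (u * X j - C (d:ℂ) * h j) * deh n (pderiv (Fin.succ j) f)
          = u * (∑ j, X j * pderiv j (deh n f)) - C (d:ℂ) * (u * deh n f) := by
        have : ∀ j : Fin n, (u * X j - C (d:ℂ) * h j) * deh n (pderiv (Fin.succ j) f)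
            = u * (X j * pderiv j (deh n f)) - C (d:ℂ) * (h j * pderiv j (deh n f)) := by
          intro j; rw [← pderiv_deh]; ring
        rw [Finset.sum_congr rfl fun j _ => this j, Finset.sum_sub_distrib,
          ← Finset.mul_sum, ← Finset.mul_sum, hh']
      rw [expand]
      ring
    set N := Finset.univ.sup (fun i => (r i).totalDegree) with hN
    have hom : ∀ i, (homog N (r i)).IsHomogeneous N := fun i =>
      homog_isHomogeneous _ _ (Finset.le_sup (f := fun i => (r i).totalDegree) (Finset.mem_univ i))
    have hEhom : (∑ i, homog N (r i) * pderiv i f).IsHomogeneous (N + (d-1)) :=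
      IsHomogeneous.sum _ _ _ fun i _ => (hom i).mul (isHomogeneous_pderiv hf i)
    have hEdeh : deh n (∑ i, homog N (r i) * pderiv i f) = 0 := by
      simp only [map_sum, map_mul, deh_homog]; exact hrel
    have hE : ∑ i, (fun i => homog N (r i)) i * pderiv i f = 0 :=
      eq_zero_of_deh_eq_zero hEhom hEdeh
    have hv := hall (fun i => homog N (r i)) hE 0
    rw [eval_pt_homog] at hv
    simp only [hrdef, Fin.cases_zero] at hv
    exact hu0 hv
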